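/- For every unit quaternion b, right multiplication by b maps each left Clifford parallel class onto a left Clifford parallel class: for every line ℓ, the image under m ↦ m * b = {q * b : q ∈ m} of the class {a • ℓ : a a unit quaternion} equals the class {a • (ℓ * b) : a a unit quaternion}. Moreover, the right multiplications act transitively on the set of left Clifford parallel classes: for any two lines ℓ and m there is a unit quaternion b such that the left Clifford parallel class of ℓ * b equals the left Clifford parallel class of m. -/

import Mathlib

open Quaternion

/-- The left Clifford parallel class of a line `ℓ`: the set of images of `ℓ` under left
multiplications by unit quaternions. -/
def leftCliffordClass (ℓ : Submodule ℝ ℍ[ℝ]) : Set (Submodule ℝ ℍ[ℝ]) :=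
  {m | ∃ a : ℍ[ℝ], ‖a‖ = 1 ∧ m = Submodule.map (LinearMap.mulLeft ℝ a) ℓ}

private lemma map_comm (a b : ℍ[ℝ]) (ℓ : Submodule ℝ ℍ[ℝ]) :
    Submodule.map (LinearMap.mulRight ℝ b) (Submodule.map (LinearMap.mulLeft ℝ a) ℓ) =
      Submodule.map (LinearMap.mulLeft ℝ a) (Submodule.map (LinearMap.mulRight ℝ b) ℓ) := by
  rw [← Submodule.map_comp, ← Submodule.map_comp]
  congr 1
  refine LinearMap.ext fun x => ?_
  simp [mul_assoc]

private lemma map_mulLeft_mulLeft (a c : ℍ[ℝ]) (ℓ : Submodule ℝ ℍ[ℝ]) :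
    Submodule.map (LinearMap.mulLeft ℝ c) (Submodule.map (LinearMap.mulLeft ℝ a) ℓ) =
      Submodule.map (LinearMap.mulLeft ℝ (c * a)) ℓ := by
  rw [← Submodule.map_comp, ← LinearMap.mulLeft_mul]

private lemma map_mulRight_mulRight (a c : ℍ[ℝ]) (ℓ : Submodule ℝ ℍ[ℝ]) :
    Submodule.map (LinearMap.mulRight ℝ c) (Submodule.map (LinearMap.mulRight ℝ a) ℓ) =
      Submodule.map (LinearMap.mulRight ℝ (a * c)) ℓ := by
  rw [← Submodule.map_comp, ← LinearMap.mulRight_mul]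

/-- Invariance of left Clifford classes under left multiplication by a unit quaternion. -/
private lemma class_mulLeft (a : ℍ[ℝ]) (ha : ‖a‖ = 1) (ℓ : Submodule ℝ ℍ[ℝ]) :
    leftCliffordClass (Submodule.map (LinearMap.mulLeft ℝ a) ℓ) = leftCliffordClass ℓ := by
  have ha0 : a ≠ 0 := by intro h; rw [h] at ha; simp at ha
  ext n
  constructor
  · rintro ⟨c, hc, rfl⟩
    exact ⟨c * a, by rw [norm_mul, hc, ha, one_mul], by rw [map_mulLeft_mulLeft]⟩
  · rintro ⟨c, hc, rfl⟩
    refine ⟨c * a⁻¹, ?_, ?_⟩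
    · rw [norm_mul, hc, norm_inv, ha, one_mul, inv_one]
    · rw [map_mulLeft_mulLeft, mul_assoc, inv_mul_cancel₀ ha0, mul_one]

/-- Left/right multiplications by nonzero quaternions preserve `finrank`. -/
private lemma finrank_map_mulLeft (a : ℍ[ℝ]) (ha : a ≠ 0) (ℓ : Submodule ℝ ℍ[ℝ]) :
    Module.finrank ℝ (Submodule.map (LinearMap.mulLeft ℝ a) ℓ) = Module.finrank ℝ ℓ := by
  let e : ℍ[ℝ] ≃ₗ[ℝ] ℍ[ℝ] :=
    LinearEquiv.ofLinear (LinearMap.mulLeft ℝ a) (LinearMap.mulLeft ℝ a⁻¹)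
      (LinearMap.ext fun x => by simp [← mul_assoc, mul_inv_cancel₀ ha])
      (LinearMap.ext fun x => by simp [← mul_assoc, inv_mul_cancel₀ ha])
  exact LinearEquiv.finrank_map_eq e ℓ

private lemma finrank_map_mulRight (a : ℍ[ℝ]) (ha : a ≠ 0) (ℓ : Submodule ℝ ℍ[ℝ]) :
    Module.finrank ℝ (Submodule.map (LinearMap.mulRight ℝ a) ℓ) = Module.finrank ℝ ℓ := by
  let e : ℍ[ℝ] ≃ₗ[ℝ] ℍ[ℝ] :=
    LinearEquiv.ofLinear (LinearMap.mulRight ℝ a) (LinearMap.mulRight ℝ a⁻¹)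
      (LinearMap.ext fun x => by simp [mul_assoc, inv_mul_cancel₀ ha])
      (LinearMap.ext fun x => by simp [mul_assoc, mul_inv_cancel₀ ha])
  exact LinearEquiv.finrank_map_eq e ℓ

private lemma unit_mul_star (q : ℍ[ℝ]) (hq : ‖q‖ = 1) : q * star q = 1 := by
  simp [Quaternion.self_mul_star, Quaternion.normSq_eq_norm_mul_self, hq]

/-- Each 2-dimensional subspace containing 1 contains a purely imaginary unit quaternion. -/
private lemma exists_im_unit (ℓ : Submodule ℝ ℍ[ℝ]) (hd : Module.finrank ℝ ℓ = 2)
    (h1 : (1 : ℍ[ℝ]) ∈ ℓ) : ∃ w : ℍ[ℝ], w ∈ ℓ ∧ w.re = 0 ∧ ‖w‖ = 1 := by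
  have hnle : ¬ ℓ ≤ (ℝ ∙ (1 : ℍ[ℝ])) := by
    intro hle
    have := Submodule.finrank_mono hle
    rw [hd, finrank_span_singleton (one_ne_zero)] at this
    omega
  obtain ⟨p, hp, hp1⟩ := SetLike.not_le_iff_exists.mp hnle
  set w0 : ℍ[ℝ] := p - p.re • 1 with hw0
  have hw0mem : w0 ∈ ℓ := Submodule.sub_mem ℓ hp (Submodule.smul_mem ℓ _ h1)
  have hw0re : w0.re = 0 := by simp [hw0]
  have hw0ne : w0 ≠ 0 := by
    intro h
    apply hp1
    rw [Submodule.mem_span_singleton]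
    exact ⟨p.re, (sub_eq_zero.mp h).symm⟩
  refine ⟨‖w0‖⁻¹ • w0, Submodule.smul_mem ℓ _ hw0mem, ?_, ?_⟩
  · simp [hw0re]
  · rw [norm_smul, norm_inv, norm_norm, inv_mul_cancel₀ (norm_ne_zero_iff.mpr hw0ne)]

private lemma im_unit_sq (z : ℍ[ℝ]) (hre : z.re = 0) (hz : ‖z‖ = 1) : z * z = -1 := by
  have hstar : star z = -z := Quaternion.star_eq_neg.mpr hre
  have h2 := unit_mul_star z hz
  rw [hstar, mul_neg] at h2
  exact neg_eq_iff_eq_neg.mp h2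

/-- Any two purely imaginary unit quaternions are conjugate up to sign. -/
private lemma exists_conj (w z : ℍ[ℝ]) (hwre : w.re = 0) (hw : ‖w‖ = 1)
    (hzre : z.re = 0) (hz : ‖z‖ = 1) :
    ∃ q : ℍ[ℝ], ‖q‖ = 1 ∧ (q * w * star q = z ∨ q * w * star q = -z) := by
  have hw2 : w * w = -1 := im_unit_sq w hwre hw
  have hz2 : z * z = -1 := im_unit_sq z hzre hz
  by_cases h : z * w = 1
  · refine ⟨1, by simp, Or.inr ?_⟩
    have hw' : w = -z := by
      have h3 := congrArg (z * ·) h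
      simp only [← mul_assoc, hz2, mul_one] at h3
      rw [neg_one_mul] at h3
      rw [← neg_eq_iff_eq_neg.mp h3]
    simp [hw']
  · set q' : ℍ[ℝ] := 1 - z * w with hq'
    have hq'ne : q' ≠ 0 := by
      intro hh
      apply h
      rw [hq', sub_eq_zero] at hh
      exact hh.symm
    have hkey : z * q' = q' * w := by
      rw [hq', mul_sub, sub_mul, mul_one, one_mul, mul_assoc z w w, hw2,
        ← mul_assoc z z w, hz2, mul_neg_one, neg_one_mul, sub_neg_eq_add, sub_neg_eq_add,
        add_comm]
    set q : ℍ[ℝ] := ‖q'‖⁻¹ • q' with hq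
    have hqn : ‖q‖ = 1 := by
      rw [hq, norm_smul, norm_inv, norm_norm, inv_mul_cancel₀ (norm_ne_zero_iff.mpr hq'ne)]
    refine ⟨q, hqn, Or.inl ?_⟩
    have hqw : q * w = z * q := by
      rw [hq, smul_mul_assoc, mul_smul_comm, hkey]
    rw [hqw, mul_assoc, unit_mul_star q hqn, mul_one]

/-- Two 2-dimensional subspaces sharing `1` and a common nonzero imaginary element coincide. -/
private lemma eq_of_common (A B : Submodule ℝ ℍ[ℝ]) (hA : Module.finrank ℝ A = 2)
    (hB : Module.finrank ℝ B = 2) (h1A : (1 : ℍ[ℝ]) ∈ A) (h1B : (1 : ℍ[ℝ]) ∈ B)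
    {z : ℍ[ℝ]} (hzre : z.re = 0) (hzne : z ≠ 0) (hzA : z ∈ A) (hzB : z ∈ B) : A = B := by
  have hli : LinearIndependent ℝ ![(1 : ℍ[ℝ]), z] := by
    rw [LinearIndependent.pair_iff' one_ne_zero]
    intro a ha
    apply hzne
    rw [← ha]
    have : (a • (1:ℍ[ℝ])).re = z.re := by rw [ha]
    simp only [Quaternion.re_smul, Quaternion.re_one, smul_eq_mul, mul_one, hzre] at this
    rw [this, zero_smul]
  have hsp : Module.finrank ℝ (Submodule.span ℝ (Set.range ![(1 : ℍ[ℝ]), z])) = 2 := by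
    rw [finrank_span_eq_card hli, Fintype.card_fin]
  have hle : ∀ C : Submodule ℝ ℍ[ℝ], (1 : ℍ[ℝ]) ∈ C → z ∈ C →
      Submodule.span ℝ (Set.range ![(1 : ℍ[ℝ]), z]) ≤ C := by
    intro C h1 h2
    rw [Submodule.span_le]
    rintro x ⟨i, rfl⟩
    fin_cases i <;> simpa
  have e1 := Submodule.eq_of_le_of_finrank_eq (hle A h1A hzA) (by rw [hsp, hA])
  have e2 := Submodule.eq_of_le_of_finrank_eq (hle B h1B hzB) (by rw [hsp, hB])
  rw [← e1, ← e2]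

theorem rightMul_on_leftCliffordClasses :
    (∀ b : ℍ[ℝ], ‖b‖ = 1 → ∀ ℓ : Submodule ℝ ℍ[ℝ], Module.finrank ℝ ℓ = 2 →
      Submodule.map (LinearMap.mulRight ℝ b) '' leftCliffordClass ℓ =
        leftCliffordClass (Submodule.map (LinearMap.mulRight ℝ b) ℓ)) ∧
    (∀ ℓ m : Submodule ℝ ℍ[ℝ], Module.finrank ℝ ℓ = 2 → Module.finrank ℝ m = 2 →
      ∃ b : ℍ[ℝ], ‖b‖ = 1 ∧
        leftCliffordClass (Submodule.map (LinearMap.mulRight ℝ b) ℓ) =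
          leftCliffordClass m) := by
  constructor
  · intro b hb ℓ _
    ext n
    simp only [Set.mem_image, leftCliffordClass, Set.mem_setOf_eq]
    constructor
    · rintro ⟨k, ⟨a, ha, rfl⟩, rfl⟩
      exact ⟨a, ha, map_comm a b ℓ⟩
    · rintro ⟨a, ha, rfl⟩
      exact ⟨Submodule.map (LinearMap.mulLeft ℝ a) ℓ, ⟨a, ha, rfl⟩, map_comm a b ℓ⟩
  · intro ℓ m hℓ hm
    -- pick unit elements of ℓ and m
    have hne : ∀ p : Submodule ℝ ℍ[ℝ], Module.finrank ℝ p = 2 → ∃ x ∈ p, ‖x‖ = 1 := by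
      intro p hp
      have hpb : p ≠ ⊥ := by
        intro h
        rw [h, finrank_bot] at hp
        omega
      obtain ⟨x, hx, hx0⟩ := Submodule.ne_bot_iff p |>.mp hpb
      refine ⟨‖x‖⁻¹ • x, Submodule.smul_mem p _ hx, ?_⟩
      rw [norm_smul, norm_inv, norm_norm, inv_mul_cancel₀ (norm_ne_zero_iff.mpr hx0)]
    obtain ⟨u, hu, hu1⟩ := hne ℓ hℓ
    obtain ⟨v, hv, hv1⟩ := hne m hm
    have hsu : ‖star u‖ = 1 := by rw [Quaternion.norm_star]; exact hu1
    have hsv : ‖star v‖ = 1 := by rw [Quaternion.norm_star]; exact hv1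
    have hsu0 : star u ≠ 0 := by intro h; rw [h] at hsu; simp at hsu
    have hsv0 : star v ≠ 0 := by intro h; rw [h] at hsv; simp at hsv
    set ℓ₁ := Submodule.map (LinearMap.mulRight ℝ (star u)) ℓ with hℓ₁def
    set m₁ := Submodule.map (LinearMap.mulLeft ℝ (star v)) m with hm₁def
    have hℓ₁r : Module.finrank ℝ ℓ₁ = 2 := by rw [hℓ₁def, finrank_map_mulRight _ hsu0, hℓ]
    have hm₁r : Module.finrank ℝ m₁ = 2 := by rw [hm₁def, finrank_map_mulLeft _ hsv0, hm]
    have h1ℓ₁ : (1 : ℍ[ℝ]) ∈ ℓ₁ := ⟨u, hu, unit_mul_star u hu1⟩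
    have h1m₁ : (1 : ℍ[ℝ]) ∈ m₁ := by
      refine ⟨v, hv, ?_⟩
      show star v * v = 1
      simp [Quaternion.star_mul_self, Quaternion.normSq_eq_norm_mul_self, hv1]
    obtain ⟨w, hwℓ₁, hwre, hw1⟩ := exists_im_unit ℓ₁ hℓ₁r h1ℓ₁
    obtain ⟨z, hzm₁, hzre, hz1⟩ := exists_im_unit m₁ hm₁r h1m₁
    obtain ⟨q, hq1, hqc⟩ := exists_conj w z hwre hw1 hzre hz1
    have hsq : ‖star q‖ = 1 := by rw [Quaternion.norm_star]; exact hq1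
    refine ⟨star u * star q, by rw [norm_mul, hsu, hsq, one_mul], ?_⟩
    have hmap : Submodule.map (LinearMap.mulRight ℝ (star u * star q)) ℓ =
        Submodule.map (LinearMap.mulRight ℝ (star q)) ℓ₁ := by
      rw [hℓ₁def, map_mulRight_mulRight]
    set A := Submodule.map (LinearMap.mulLeft ℝ q)
      (Submodule.map (LinearMap.mulRight ℝ (star q)) ℓ₁) with hAdef
    have hsq0 : star q ≠ 0 := by intro h; rw [h] at hsq; simp at hsq
    have hq0 : q ≠ 0 := by intro h; rw [h] at hq1; simp at hq1
    have hAr : Module.finrank ℝ A = 2 := by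
      rw [hAdef, finrank_map_mulLeft _ hq0, finrank_map_mulRight _ hsq0, hℓ₁r]
    have h1A : (1 : ℍ[ℝ]) ∈ A := by
      refine ⟨star q, ⟨1, h1ℓ₁, one_mul _⟩, ?_⟩
      show q * star q = 1
      exact unit_mul_star q hq1
    have hzA' : q * w * star q ∈ A := by
      refine ⟨w * star q, ⟨w, hwℓ₁, rfl⟩, ?_⟩
      show q * (w * star q) = q * w * star q
      rw [mul_assoc]
    have hzne : z ≠ 0 := by intro h; rw [h] at hz1; simp at hz1
    have hAm₁ : A = m₁ := by
      rcases hqc with hcase | hcase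
      · rw [hcase] at hzA'
        exact eq_of_common A m₁ hAr hm₁r h1A h1m₁ hzre hzne hzA' hzm₁
      · rw [hcase] at hzA'
        have hzA : z ∈ A := by
          have := A.neg_mem hzA'
          rwa [neg_neg] at this
        exact eq_of_common A m₁ hAr hm₁r h1A h1m₁ hzre hzne hzA hzm₁
    calc leftCliffordClass (Submodule.map (LinearMap.mulRight ℝ (star u * star q)) ℓ)
        = leftCliffordClass (Submodule.map (LinearMap.mulRight ℝ (star q)) ℓ₁) := by rw [hmap]
      _ = leftCliffordClass A := (class_mulLeft q hq1 _).symm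
      _ = leftCliffordClass m₁ := by rw [hAm₁]
      _ = leftCliffordClass m := class_mulLeft (star v) hsv m
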